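/- In the group D, the centralizer of y equals the subgroup generated by x^(p^(m−l)) and y; moreover the cyclic subgroups ⟨x^(p^(m−l))⟩ and ⟨y⟩ intersect trivially, and the centralizer of y has order p^(n+l). -/

import Mathlib

set_option maxHeartbeats 2000000 in
/-- In the split metacyclic group
`D = ⟨x, y ∣ x^(p^m) = y^(p^n) = 1, y x y⁻¹ = x^(1+p^l)⟩` (`p` odd, `0 < l < m`,
`m − l ≤ n`), the centralizer of `y` is `⟨x^(p^(m−l)), y⟩`, the subgroups
`⟨x^(p^(m−l))⟩` and `⟨y⟩` intersect trivially, and `|C_D(y)| = p^(n+l)`. -/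
theorem stmt_3 (p m n l : ℕ) (hp : p.Prime) (hodd : Odd p)
    (hl : 0 < l) (hlm : l < m) (hmn : m - l ≤ n)
    (D : Type*) [Group D] (x y : D)
    (hcard : Nat.card D = p ^ (m + n))
    (hx : orderOf x = p ^ m) (hy : orderOf y = p ^ n)
    (hconj : y * x * y⁻¹ = x ^ (1 + p ^ l))
    (hgen : Subgroup.closure {x, y} = ⊤) :
    Subgroup.centralizer {y} = Subgroup.closure {x ^ p ^ (m - l), y} ∧
    Subgroup.zpowers (x ^ p ^ (m - l)) ⊓ Subgroup.zpowers y = ⊥ ∧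
    Nat.card (Subgroup.centralizer {y} : Subgroup D) = p ^ (n + l) := by
  have hp1 : 1 < p := hp.one_lt
  have hpm1 : 1 < p ^ m := Nat.one_lt_pow (by omega) hp1
  haveI : Finite D := Nat.finite_of_card_ne_zero (by rw [hcard]; positivity)
  set a : D := x ^ p ^ (m - l) with ha
  -- conjugation formulas
  have hconjz : ∀ i : ℤ, y * x ^ i * y⁻¹ = x ^ (((1 + p ^ l : ℕ) : ℤ) * i) := by
    intro i
    rw [← conj_zpow, hconj, ← zpow_natCast x (1 + p ^ l), ← zpow_mul]
  have hconjn : ∀ k : ℕ, y * x ^ k * y⁻¹ = x ^ ((1 + p ^ l) * k) := by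
    intro k
    rw [← conj_pow, hconj, ← pow_mul]
  -- x^(p^m) = 1
  have hxpm : x ^ p ^ m = 1 := by rw [← hx]; exact pow_orderOf_eq_one x
  -- a commutes with y
  have hay : y * a = a * y := by
    have h1 : y * a * y⁻¹ = a := by
      rw [ha, hconjn]
      have he : (1 + p ^ l) * p ^ (m - l) = p ^ (m - l) + p ^ m := by
        rw [add_mul, one_mul, ← pow_add]
        congr 2
        omega
      rw [he, pow_add, hxpm, mul_one]
    calc y * a = (y * a * y⁻¹) * y := by group
    _ = a * y := by rw [h1]
  -- coprimality and the inverse exponent k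
  have hcop : Nat.Coprime (1 + p ^ l) (p ^ m) := by
    apply Nat.Coprime.pow_right
    rcases Nat.coprime_or_dvd_of_prime hp (1 + p ^ l) with h | h
    · exact h.symm
    · exfalso
      have : p ∣ p ^ l := dvd_pow_self p (by omega)
      have : p ∣ 1 := (Nat.dvd_add_right this).mp (by rwa [Nat.add_comm] at h)
      have := Nat.dvd_one.mp this
      omega
  obtain ⟨k, -, hk⟩ := Nat.exists_mul_mod_eq_one_of_coprime hcop hpm1
  have hxk : y⁻¹ * x * y = x ^ k := by
    have h1 : y * x ^ k * y⁻¹ = x := by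
      rw [hconjn, ← pow_mod_orderOf, hx, hk, pow_one]
    calc y⁻¹ * x * y = y⁻¹ * (y * x ^ k * y⁻¹) * y := by rw [h1]
    _ = x ^ k := by group
  have hconjinv : ∀ i : ℤ, y⁻¹ * x ^ i * y = x ^ ((k : ℤ) * i) := by
    intro i
    have : y⁻¹ * x ^ i * y = y⁻¹ * x ^ i * (y⁻¹)⁻¹ := by rw [inv_inv]
    rw [this, ← conj_zpow]
    have : y⁻¹ * x * (y⁻¹)⁻¹ = x ^ k := by rw [inv_inv]; exact hxk
    rw [this, ← zpow_natCast x k, ← zpow_mul]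
  -- zpowers x is normal
  set X : Subgroup D := Subgroup.zpowers x with hX
  set Y : Subgroup D := Subgroup.zpowers y with hY
  have hXnormal : X.Normal := by
    rw [← Subgroup.normalizer_eq_top_iff]
    rw [← top_le_iff, ← hgen, Subgroup.closure_le]
    rintro g (rfl | rfl)
    · exact Subgroup.le_normalizer (Subgroup.mem_zpowers g)
    · rw [SetLike.mem_coe, Subgroup.mem_normalizer_iff]
      intro h
      rw [Subgroup.mem_zpowers_iff, Subgroup.mem_zpowers_iff]
      constructor
      · rintro ⟨i, rfl⟩
        rw [hconjz]
        exact ⟨_, rfl⟩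
      · rintro ⟨i, hi⟩
        have h2 : h = g⁻¹ * x ^ i * g := by
          rw [hi]; group
        rw [h2, hconjinv]
        exact ⟨_, rfl⟩
  -- decomposition: every element is x^i * y^j
  have hdecomp : ∀ g : D, ∃ i j : ℤ, g = x ^ i * y ^ j := by
    intro g
    have hsup : X ⊔ Y = ⊤ := by
      rw [← hgen]
      rw [hX, hY, Subgroup.zpowers_eq_closure, Subgroup.zpowers_eq_closure,
        ← Subgroup.closure_union]
      rw [Set.singleton_union]
    have hg : g ∈ ((X ⊔ Y : Subgroup D) : Set D) := by rw [hsup]; trivial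
    rw [Subgroup.normal_mul] at hg
    obtain ⟨u, hu, v, hv, rfl⟩ := hg
    obtain ⟨i, rfl⟩ := hu
    obtain ⟨j, rfl⟩ := hv
    exact ⟨i, j, rfl⟩
  -- cardinalities
  have hcX : Nat.card X = p ^ m := by rw [hX, Nat.card_zpowers, hx]
  have hcY : Nat.card Y = p ^ n := by rw [hY, Nat.card_zpowers, hy]
  -- X ⊓ Y = ⊥
  have hXY : X ⊓ Y = ⊥ := by
    have hsurj : Function.Surjective (fun z : X × Y => (z.1 : D) * z.2) := by
      intro g
      obtain ⟨i, j, rfl⟩ := hdecomp g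
      exact ⟨(⟨x ^ i, ⟨i, rfl⟩⟩, ⟨y ^ j, ⟨j, rfl⟩⟩), rfl⟩
    have hbij : Function.Bijective (fun z : X × Y => (z.1 : D) * z.2) := by
      rw [Nat.bijective_iff_surjective_and_card]
      refine ⟨hsurj, ?_⟩
      rw [Nat.card_prod, hcX, hcY, hcard, pow_add]
    rw [eq_bot_iff]
    rintro g ⟨hgX, hgY⟩
    have := hbij.1 (a₁ := (⟨g, hgX⟩, (1 : Y))) (a₂ := ((1 : X), ⟨g, hgY⟩))
      (by simp)
    have : (⟨g, hgX⟩ : X) = 1 := congrArg Prod.fst this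
    simpa [Subgroup.mem_bot] using congrArg (Subtype.val) this
  have hAX : Subgroup.zpowers a ≤ X := by
    rw [Subgroup.zpowers_le, ha, ← zpow_natCast x]
    exact zpow_mem (Subgroup.mem_zpowers x) _
  have hAY : Subgroup.zpowers a ⊓ Y = ⊥ := by
    rw [eq_bot_iff, ← hXY]
    exact inf_le_inf_right Y hAX
  -- order of a
  have hoa : orderOf a = p ^ l := by
    rw [ha, orderOf_pow_of_dvd (by positivity) (by rw [hx]; exact pow_dvd_pow p (by omega)),
      hx, Nat.pow_div (by omega) hp.pos]
    congr 1
    omega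
  -- centralizer characterization
  have hmemC : ∀ g : D, g ∈ Subgroup.centralizer {y} ↔ y * g = g * y := by
    intro g
    rw [Subgroup.mem_centralizer_iff]
    simp
  -- key divisibility step
  have hkey : ∀ i : ℤ, y * x ^ i = x ^ i * y → ∃ t : ℤ, x ^ i = a ^ t := by
    intro i hi
    have h1 : y * x ^ i * y⁻¹ = x ^ i := by
      rw [hi]; group
    rw [hconjz] at h1
    have h2 : x ^ (((1 + p ^ l : ℕ) : ℤ) * i - i) = 1 := by
      rw [zpow_sub, h1, mul_inv_cancel]
    rw [← orderOf_dvd_iff_zpow_eq_one, hx] at h2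
    have h3 : ((1 + p ^ l : ℕ) : ℤ) * i - i = (p ^ l : ℕ) * i := by
      push_cast; ring
    rw [h3] at h2
    have h4 : ((p ^ m : ℕ) : ℤ) = ((p ^ (m - l) : ℕ) : ℤ) * ((p ^ l : ℕ) : ℤ) := by
      push_cast
      rw [← pow_add]
      congr 1
      omega
    rw [h4] at h2
    have h5 : ((p ^ (m - l) : ℕ) : ℤ) ∣ i := by
      have hpl : ((p ^ l : ℕ) : ℤ) ≠ 0 := by positivity
      obtain ⟨c, hc⟩ := h2
      refine ⟨c, mul_left_cancel₀ hpl ?_⟩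
      linear_combination hc
    obtain ⟨t, rfl⟩ := h5
    refine ⟨t, ?_⟩
    rw [ha, ← zpow_natCast x (p ^ (m - l)), ← zpow_mul]
  -- centralizer = closure {a, y}
  have hC : Subgroup.centralizer {y} = Subgroup.closure {a, y} := by
    apply le_antisymm
    · intro g hg
      rw [hmemC] at hg
      obtain ⟨i, j, rfl⟩ := hdecomp g
      have hyx : y * x ^ i = x ^ i * y := by
        have h2 : (y * x ^ i) * y ^ j = (x ^ i * y) * y ^ j := by
          calc (y * x ^ i) * y ^ j = y * (x ^ i * y ^ j) := by group
          _ = x ^ i * y ^ j * y := hg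
          _ = (x ^ i * y) * y ^ j := by group
        exact mul_right_cancel h2
      obtain ⟨t, ht⟩ := hkey i hyx
      rw [ht]
      have hamem : a ∈ Subgroup.closure ({a, y} : Set D) :=
        Subgroup.subset_closure (Set.mem_insert a {y})
      have hymem : y ∈ Subgroup.closure ({a, y} : Set D) :=
        Subgroup.subset_closure (Set.mem_insert_of_mem a rfl)
      exact mul_mem (zpow_mem hamem t) (zpow_mem hymem j)
    · rw [Subgroup.closure_le]
      rintro g (rfl | rfl)
      · rw [SetLike.mem_coe, hmemC]; exact hay
      · rw [SetLike.mem_coe, hmemC]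
  refine ⟨hC, hAY, ?_⟩
  -- cardinality of the centralizer
  have hdisj : Disjoint (Subgroup.zpowers a) Y := disjoint_iff.mpr hAY
  have hinj := Subgroup.mul_injective_of_disjoint hdisj
  have haC : a ∈ Subgroup.centralizer ({y} : Set D) := by rw [hmemC]; exact hay
  have hyC : y ∈ Subgroup.centralizer ({y} : Set D) := by rw [hmemC]
  have hAC : Subgroup.zpowers a ≤ Subgroup.centralizer ({y} : Set D) :=
    Subgroup.zpowers_le.mpr haC
  have hYC : Y ≤ Subgroup.centralizer ({y} : Set D) :=
    Subgroup.zpowers_le.mpr hyC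
  let f : Subgroup.zpowers a × Y → (Subgroup.centralizer ({y} : Set D)) :=
    fun z => ⟨(z.1 : D) * z.2, mul_mem (hAC z.1.2) (hYC z.2.2)⟩
  have hfinj : Function.Injective f := by
    intro z w hzw
    exact hinj (Subtype.ext_iff.mp hzw)
  have hfsurj : Function.Surjective f := by
    rintro ⟨g, hg⟩
    rw [hmemC] at hg
    obtain ⟨i, j, rfl⟩ := hdecomp g
    have hyx : y * x ^ i = x ^ i * y := by
      have h2 : (y * x ^ i) * y ^ j = (x ^ i * y) * y ^ j := by
        calc (y * x ^ i) * y ^ j = y * (x ^ i * y ^ j) := by group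
        _ = x ^ i * y ^ j * y := hg
        _ = (x ^ i * y) * y ^ j := by group
      exact mul_right_cancel h2
    obtain ⟨t, ht⟩ := hkey i hyx
    refine ⟨(⟨a ^ t, zpow_mem (Subgroup.mem_zpowers a) t⟩,
      ⟨y ^ j, zpow_mem (Subgroup.mem_zpowers y) j⟩), ?_⟩
    refine Subtype.ext ?_
    show a ^ t * y ^ j = x ^ i * y ^ j
    rw [← ht]
  have : Nat.card (Subgroup.centralizer ({y} : Set D)) =
      Nat.card (Subgroup.zpowers a × Y) :=
    (Nat.card_eq_of_bijective f ⟨hfinj, hfsurj⟩).symm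
  rw [this, Nat.card_prod, Nat.card_zpowers, Nat.card_zpowers, hoa, hy, ← pow_add]
  congr 1
  omega
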